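/- Let (g, ·) be a commutative associative algebra over a field K, let D₁, D₂, D₃ : g → g be pairwise commuting derivations, and equip g with the 3-Lie bracket ⟦x,y,z⟧ given by the 3×3 determinant (expanded with the multiplication of g) of the matrix with rows (D₁x, D₁y, D₁z), (D₂x, D₂y, D₂z), (D₃x, D₃y, D₃z). If N : g → g is a Nijenhuis operator on the associative algebra (g, ·) satisfying N∘Dᵢ = Dᵢ∘N for i = 1, 2, 3, then N is a Nijenhuis operator on the 3-Lie algebra (g, ⟦·,·,·⟧), i.e. ⟦Nx, Ny, Nz⟧ = N(⟦x,y,z⟧_N²) for all x, y, z ∈ g. -/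
import Mathlib


/-- `br` is a 3-Lie algebra bracket over `K`: trilinear, alternating (skew-symmetric)
and satisfying the Filippov identity. -/
def Is3LieBracket (K : Type*) [Field K] {A : Type*} [AddCommGroup A] [Module K A]
    (br : A → A → A → A) : Prop :=
  (∀ x₁ x₂ y z, br (x₁ + x₂) y z = br x₁ y z + br x₂ y z) ∧
  (∀ (c : K) (x y z : A), br (c • x) y z = c • br x y z) ∧
  (∀ x y₁ y₂ z, br x (y₁ + y₂) z = br x y₁ z + br x y₂ z) ∧
  (∀ (c : K) (x y z : A), br x (c • y) z = c • br x y z) ∧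
  (∀ x y z₁ z₂, br x y (z₁ + z₂) = br x y z₁ + br x y z₂) ∧
  (∀ (c : K) (x y z : A), br x y (c • z) = c • br x y z) ∧
  (∀ x y, br x x y = 0) ∧ (∀ x y, br x y y = 0) ∧ (∀ x y, br x y x = 0) ∧
  (∀ x y a b c, br x y (br a b c) = br (br x y a) b c + br a (br x y b) c + br a b (br x y c))

/-- `N` is a Nijenhuis operator on the 3-Lie algebra `(A, br)`:
`[Nx,Ny,Nz] = N([x,y,z]_N²)` where
`[x,y,z]_N¹ = [Nx,y,z] + [x,Ny,z] + [x,y,Nz] − N[x,y,z]` and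
`[x,y,z]_N² = [Nx,Ny,z] + [Nx,y,Nz] + [x,Ny,Nz] − N([x,y,z]_N¹)`. -/
def IsNijenhuis3 (K : Type*) [Field K] {A : Type*} [AddCommGroup A] [Module K A]
    (br : A → A → A → A) (N : A →ₗ[K] A) : Prop :=
  ∀ x y z : A,
    br (N x) (N y) (N z)
      = N (br (N x) (N y) z + br (N x) y (N z) + br x (N y) (N z)
          - N (br (N x) y z + br x (N y) z + br x y (N z) - N (br x y z)))

/-- The 3×3 determinant bracket with rows `(D₁x,D₁y,D₁z)`, `(D₂x,D₂y,D₂z)`,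
`(D₃x,D₃y,D₃z)`, expanded with the multiplication of `A`. -/
def det3Bracket {K : Type*} [Field K] {A : Type*} [NonUnitalCommRing A] [Module K A]
    (D₁ D₂ D₃ : A →ₗ[K] A) (x y z : A) : A :=
  ∑ σ : Equiv.Perm (Fin 3),
    (Equiv.Perm.sign σ : ℤ) •
      (D₁ ((![x, y, z]) (σ 0)) * (D₂ ((![x, y, z]) (σ 1)) * D₃ ((![x, y, z]) (σ 2))))

theorem det3Bracket_eq {K : Type*} [Field K] {A : Type*} [NonUnitalCommRing A] [Module K A]
    (D₁ D₂ D₃ : A →ₗ[K] A) (x y z : A) :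
    det3Bracket D₁ D₂ D₃ x y z =
      D₁ x * (D₂ y * D₃ z) - D₁ y * (D₂ x * D₃ z) - D₁ z * (D₂ y * D₃ x)
        - D₁ x * (D₂ z * D₃ y) + D₁ y * (D₂ z * D₃ x) + D₁ z * (D₂ x * D₃ y) := by
  rw [det3Bracket, show (Finset.univ : Finset (Equiv.Perm (Fin 3))) =
    {1, Equiv.swap 0 1, Equiv.swap 0 2, Equiv.swap 1 2,
     Equiv.swap 0 1 * Equiv.swap 1 2, Equiv.swap 1 2 * Equiv.swap 0 1} from by decide]
  rw [Finset.sum_insert (by decide), Finset.sum_insert (by decide),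
    Finset.sum_insert (by decide), Finset.sum_insert (by decide),
    Finset.sum_insert (by decide), Finset.sum_singleton]
  have e1 : ∀ i : Fin 3, (1 : Equiv.Perm (Fin 3)) i = i := by decide
  have s01 : ((Equiv.Perm.sign (Equiv.swap (0:Fin 3) 1)) : ℤ) = -1 := by decide
  have s02 : ((Equiv.Perm.sign (Equiv.swap (0:Fin 3) 2)) : ℤ) = -1 := by decide
  have s12 : ((Equiv.Perm.sign (Equiv.swap (1:Fin 3) 2)) : ℤ) = -1 := by decide
  have sc1 : ((Equiv.Perm.sign (Equiv.swap (0:Fin 3) 1 * Equiv.swap 1 2)) : ℤ) = 1 := by decide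
  have sc2 : ((Equiv.Perm.sign (Equiv.swap (1:Fin 3) 2 * Equiv.swap 0 1)) : ℤ) = 1 := by decide
  have v01 : ∀ i : Fin 3, (Equiv.swap (0:Fin 3) 1) i = ![1,0,2] i := by decide
  have v02 : ∀ i : Fin 3, (Equiv.swap (0:Fin 3) 2) i = ![2,1,0] i := by decide
  have v12 : ∀ i : Fin 3, (Equiv.swap (1:Fin 3) 2) i = ![0,2,1] i := by decide
  have vc1 : ∀ i : Fin 3, ((Equiv.swap (0:Fin 3) 1 * Equiv.swap 1 2 : Equiv.Perm (Fin 3))) i = ![1,2,0] i := by decide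
  have vc2 : ∀ i : Fin 3, ((Equiv.swap (1:Fin 3) 2 * Equiv.swap 0 1 : Equiv.Perm (Fin 3))) i = ![2,0,1] i := by decide
  simp only [e1, s01, s02, s12, sc1, sc2, v01, v02, v12, vc1, vc2, Equiv.Perm.sign_one,
    Units.val_one, Matrix.cons_val_zero, Matrix.cons_val_one, Matrix.head_cons,
    Matrix.cons_val_two, Matrix.tail_cons, one_smul, neg_smul]
  abel

theorem nijenhuis_ternary_key {K : Type*} [Field K] {A : Type*} [NonUnitalCommRing A] [Module K A]
    (N : A →ₗ[K] A)
    (hN : ∀ x y : A, N x * N y = N (N x * y + x * N y - N (x * y))) (a b c : A) :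
    N a * (N b * N c)
      = N (N a * (N b * c) + N a * (b * N c) + a * (N b * N c)
          - N (N a * (b * c) + a * (N b * c) + a * (b * N c) - N (a * (b * c)))) := by
  calc N a * (N b * N c)
      = N a * N (N b * c + b * N c - N (b * c)) := by rw [← hN]
    _ = N (N a * (N b * c + b * N c - N (b * c))
          + a * N (N b * c + b * N c - N (b * c))
          - N (a * (N b * c + b * N c - N (b * c)))) := hN a _
    _ = N ((N a * (N b * c) + N a * (b * N c)
            - N (N a * (b * c) + a * N (b * c) - N (a * (b * c))))
          + a * (N b * N c)
          - N (a * (N b * c) + a * (b * N c) - a * N (b * c))) := by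
        rw [← hN b c]
        congr 2
        · rw [mul_sub, mul_add, hN a (b * c)]
        · congr 1
          rw [mul_sub, mul_add]
    _ = _ := by
        simp only [map_add, map_sub]
        abel

/-- Let `D₁, D₂, D₃` be pairwise commuting derivations of a
commutative associative algebra `(A, *)` over `K`, and equip `A` with the
determinant 3-Lie bracket.  If `N` is a Nijenhuis operator on `(A, *)` commuting
with `D₁`, `D₂` and `D₃`, then `N` is a Nijenhuis operator on this 3-Lie algebra. -/
theorem nijenhuis_on_three_derivations_threeLie
    {K : Type*} [Field K] {A : Type*} [NonUnitalCommRing A] [Module K A]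
    [SMulCommClass K A A] [IsScalarTower K A A]
    (D₁ D₂ D₃ : A →ₗ[K] A)
    (hD₁ : ∀ x y : A, D₁ (x * y) = D₁ x * y + x * D₁ y)
    (hD₂ : ∀ x y : A, D₂ (x * y) = D₂ x * y + x * D₂ y)
    (hD₃ : ∀ x y : A, D₃ (x * y) = D₃ x * y + x * D₃ y)
    (h12 : ∀ x : A, D₁ (D₂ x) = D₂ (D₁ x))
    (h13 : ∀ x : A, D₁ (D₃ x) = D₃ (D₁ x))
    (h23 : ∀ x : A, D₂ (D₃ x) = D₃ (D₂ x))
    (N : A →ₗ[K] A)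
    (hN : ∀ x y : A, N x * N y = N (N x * y + x * N y - N (x * y)))
    (hND₁ : ∀ x : A, N (D₁ x) = D₁ (N x))
    (hND₂ : ∀ x : A, N (D₂ x) = D₂ (N x))
    (hND₃ : ∀ x : A, N (D₃ x) = D₃ (N x)) :
    IsNijenhuis3 K (det3Bracket D₁ D₂ D₃) N := by
  intro x y z
  simp only [det3Bracket_eq, ← hND₁, ← hND₂, ← hND₃,
    nijenhuis_ternary_key N hN, map_add, map_sub]
  abel
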